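/- Let ξᵢ (0 ≤ i ≤ p) be the Gauss–Legendre–Lobatto nodes on [−1,1], i.e. the zeros of (1−ξ²)L_p'(ξ), and let φ̂₀ be the Lagrange basis polynomial of degree p with φ̂₀(ξ₀) = 1 at ξ₀ = −1 and φ̂₀(ξⱼ) = 0 at the other nodes. Then ‖φ̂₀‖_{L²(−1,1)} ≤ 2/√(p(p+1)). -/

import Mathlib

set_option maxHeartbeats 1000000

open Polynomial intervalIntegral Finset

lemma iteratedDeriv_polyeval (n : ℕ) : ∀ q : Polynomial ℝ,
    iteratedDeriv n (fun x => q.eval x) = fun x => (derivative^[n] q).eval x := by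
  induction n with
  | zero => intro q; simp
  | succ n ih =>
    intro q
    rw [iteratedDeriv_succ', Function.iterate_succ_apply]
    rw [show (deriv fun x => q.eval x) = fun x => (derivative q).eval x from
      funext fun x => Polynomial.deriv q]
    exact ih _

lemma polyIntegrable (q : Polynomial ℝ) (a b : ℝ) :
    IntervalIntegrable (fun x => q.eval x) MeasureTheory.volume a b :=
  q.continuous.intervalIntegrable a b

/-- integration by parts for polynomials -/
lemma poly_ibp (q r : Polynomial ℝ) :
    ∫ x in (-1:ℝ)..1, q.eval x * (derivative r).eval x
      = q.eval 1 * r.eval 1 - q.eval (-1) * r.eval (-1)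
        - ∫ x in (-1:ℝ)..1, (derivative q).eval x * r.eval x := by
  exact integral_mul_deriv_eq_deriv_mul
    (fun x _ => q.hasDerivAt x) (fun x _ => r.hasDerivAt x)
    (polyIntegrable _ _ _) (polyIntegrable _ _ _)

noncomputable def RR (p : ℕ) : Polynomial ℝ := (1 - X ^ 2) ^ p

lemma RR_eq (p : ℕ) : RR p = C ((-1:ℝ)^p) * ((X - C 1)^p * (X - C (-1))^p) := by
  have h : (1 - X^2 : Polynomial ℝ) = (-1) * ((X - C 1) * (X - C (-1))) := by
    simp only [C_1, C_neg]; ring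
  rw [RR, h, mul_pow, mul_pow, C_pow, C_neg, C_1]

lemma dvd_one (p : ℕ) : (X - C (1:ℝ))^p ∣ RR p :=
  ⟨C ((-1:ℝ)^p) * (X - C (-1))^p, by rw [RR_eq p]; ring⟩

lemma dvd_negone (p : ℕ) : (X - C (-1:ℝ))^p ∣ RR p :=
  ⟨C ((-1:ℝ)^p) * (X - C 1)^p, by rw [RR_eq p]; ring⟩

lemma vanish_iter (p k : ℕ) (hk : k < p) :
    (derivative^[k] (RR p)).eval 1 = 0 ∧ (derivative^[k] (RR p)).eval (-1) = 0 := by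
  constructor
  · obtain ⟨r, hr⟩ := Polynomial.pow_sub_dvd_iterate_derivative_of_pow_dvd k (dvd_one p)
    rw [hr]
    simp [Nat.sub_ne_zero_of_lt hk, zero_pow]
  · obtain ⟨r, hr⟩ := Polynomial.pow_sub_dvd_iterate_derivative_of_pow_dvd k (dvd_negone p)
    rw [hr]
    simp [Nat.sub_ne_zero_of_lt hk, zero_pow]

lemma evalS (p n : ℕ) (x : ℝ) :
    (derivative^[n] ((X - C (1:ℝ))^p * (X - C (-1:ℝ))^p)).eval x
    = ∑ k ∈ range (n+1), (n.choose k : ℝ) *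
        ((p.descFactorial (n-k) : ℝ) * (x-1)^(p-(n-k)) *
         ((p.descFactorial k : ℝ) * (x+1)^(p-k))) := by
  rw [Polynomial.iterate_derivative_mul, eval_finset_sum]
  refine Finset.sum_congr rfl fun k hk => ?_
  rw [iterate_derivative_X_sub_pow, iterate_derivative_X_sub_pow]
  simp only [nsmul_eq_mul, eval_mul, eval_pow, eval_sub, eval_X, eval_C, eval_natCast,
    Nat.cast_mul, sub_neg_eq_add]

lemma evalS_one (m : ℕ) :
    (derivative^[m+1] ((X - C (1:ℝ))^(m+1) * (X - C (-1:ℝ))^(m+1))).eval 1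
      = ((m+1).factorial : ℝ) * 2^(m+1) := by
  rw [evalS, Finset.sum_eq_single_of_mem 0 (by simp)]
  · simp only [Nat.sub_zero, Nat.sub_self, show m+2-1 = m+1 by omega, show m+1-1=m by omega,
      show m+2-(m+1)=1 by omega, Nat.choose_zero_right, Nat.choose_self, Nat.choose_one_right,
      Nat.choose_succ_self_right, Nat.descFactorial_self, Nat.descFactorial_zero,
      Nat.descFactorial_one]
    norm_num
    try ring
  · intro k hk hk0
    simp only [mem_range] at hk
    have h1 : (m+1) - ((m+1) - k) = k := by omega
    rw [h1, show (1:ℝ)-1 = 0 by ring, zero_pow hk0]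
    ring

lemma evalS_negone (m : ℕ) :
    (derivative^[m+1] ((X - C (1:ℝ))^(m+1) * (X - C (-1:ℝ))^(m+1))).eval (-1)
      = (-2:ℝ)^(m+1) * ((m+1).factorial : ℝ) := by
  rw [evalS, Finset.sum_eq_single_of_mem (m+1) (by simp)]
  · simp only [Nat.sub_zero, Nat.sub_self, show m+2-1 = m+1 by omega, show m+1-1=m by omega,
      show m+2-(m+1)=1 by omega, Nat.choose_zero_right, Nat.choose_self, Nat.choose_one_right,
      Nat.choose_succ_self_right, Nat.descFactorial_self, Nat.descFactorial_zero,
      Nat.descFactorial_one]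
    norm_num
    try ring
  · intro k hk hk0
    simp only [mem_range] at hk
    rw [show (-1:ℝ)+1 = 0 by ring, zero_pow (by omega : m + 1 - k ≠ 0)]
    ring

lemma evalS'_one (m : ℕ) :
    (derivative^[m+2] ((X - C (1:ℝ))^(m+1) * (X - C (-1:ℝ))^(m+1))).eval 1
      = ((m+2) : ℝ) * ((m+1).factorial : ℝ) * ((m+1) * 2^m) := by
  rw [evalS, Finset.sum_eq_single_of_mem 1 (by simp)]
  · simp only [Nat.sub_zero, Nat.sub_self, show m+2-1 = m+1 by omega, show m+1-1=m by omega,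
      show m+2-(m+1)=1 by omega, Nat.choose_zero_right, Nat.choose_self, Nat.choose_one_right,
      Nat.choose_succ_self_right, Nat.descFactorial_self, Nat.descFactorial_zero,
      Nat.descFactorial_one]
    norm_num
    try ring
  · intro k hk hk0
    simp only [mem_range] at hk
    rcases Nat.eq_zero_or_pos k with rfl | hk1
    · rw [Nat.sub_zero, Nat.descFactorial_eq_zero_iff_lt.mpr (by omega)]
      norm_num
    · have h1 : m + 1 - (m + 2 - k) = k - 1 := by omega
      rw [h1, show (1:ℝ)-1 = 0 by ring, zero_pow (by omega : k - 1 ≠ 0)]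
      ring

lemma evalS'_negone (m : ℕ) :
    (derivative^[m+2] ((X - C (1:ℝ))^(m+1) * (X - C (-1:ℝ))^(m+1))).eval (-1)
      = ((m+2) : ℝ) * ((m+1) : ℝ) * (-2:ℝ)^m * ((m+1).factorial : ℝ) := by
  rw [evalS, Finset.sum_eq_single_of_mem (m+1) (by simp)]
  · simp only [Nat.sub_zero, Nat.sub_self, show m+2-1 = m+1 by omega, show m+1-1=m by omega,
      show m+2-(m+1)=1 by omega, Nat.choose_zero_right, Nat.choose_self, Nat.choose_one_right,
      Nat.choose_succ_self_right, Nat.descFactorial_self, Nat.descFactorial_zero,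
      Nat.descFactorial_one]
    norm_num
    try ring
  · intro k hk hk0
    simp only [mem_range] at hk
    rcases Nat.lt_or_ge k (m+1) with hk1 | hk1
    · rw [show (-1:ℝ)+1 = 0 by ring, zero_pow (by omega : m + 1 - k ≠ 0)]
      ring
    · have : k = m + 2 := by omega
      subst this
      rw [Nat.descFactorial_eq_zero_iff_lt.mpr (by omega : m+1 < m+2)]
      norm_num
lemma ortho (p : ℕ) : ∀ k, k ≤ p → ∀ q : Polynomial ℝ, q.natDegree < k →
    (∫ x in (-1:ℝ)..1, (derivative^[k] (RR p)).eval x * q.eval x) = 0 := by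
  intro k
  induction k with
  | zero => intro _ q hq; omega
  | succ k ih =>
    intro hk q hq
    have hvan := vanish_iter p k (by omega)
    have key : ∫ x in (-1:ℝ)..1, q.eval x * (derivative (derivative^[k] (RR p))).eval x
        = 0 - ∫ x in (-1:ℝ)..1, (derivative q).eval x * (derivative^[k] (RR p)).eval x := by
      rw [poly_ibp]
      rw [hvan.1, hvan.2]
      ring_nf
    rw [Function.iterate_succ_apply']
    calc (∫ x in (-1:ℝ)..1, (derivative (derivative^[k] (RR p))).eval x * q.eval x)
        = ∫ x in (-1:ℝ)..1, q.eval x * (derivative (derivative^[k] (RR p))).eval x := by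
          simp_rw [mul_comm]
      _ = 0 - ∫ x in (-1:ℝ)..1, (derivative q).eval x * (derivative^[k] (RR p)).eval x := key
      _ = 0 := by
          rcases eq_or_ne (derivative q) 0 with h0 | h0
          · simp [h0]
          · rw [show (∫ x in (-1:ℝ)..1, (derivative q).eval x * (derivative^[k] (RR p)).eval x)
              = ∫ x in (-1:ℝ)..1, (derivative^[k] (RR p)).eval x * (derivative q).eval x by
                simp_rw [mul_comm]]
            rw [ih (by omega) (derivative q) ?_]
            · ring
            · have h1 : (derivative q).natDegree ≤ q.natDegree - 1 :=
                natDegree_derivative_le q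
              have h2 : q.natDegree ≠ 0 := by
                intro h
                exact h0 (derivative_of_natDegree_zero h)
              omega

/-- The `n`-th Legendre polynomial, defined via Rodrigues' formula. -/
noncomputable def legendre (n : ℕ) : ℝ → ℝ := fun t =>
  ((-1 : ℝ) ^ n / (2 ^ n * n.factorial)) * iteratedDeriv n (fun x : ℝ => (1 - x ^ 2) ^ n) t

/-- The Lagrange basis polynomial `φ̂₀` of degree `p` at the Gauss–Legendre–Lobatto nodes
(the zeros of `(1−ξ²)L_p'(ξ)`), with `φ̂₀(ξ₀) = 1` at `ξ₀ = −1` and `φ̂₀(ξⱼ) = 0` at the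
other nodes, satisfies `‖φ̂₀‖_{L²(−1,1)} ≤ 2/√(p(p+1))`. -/
theorem gll_basis_L2_bound (p : ℕ) (hp : 1 ≤ p)
    (ξ : Fin (p + 1) → ℝ) (hinj : Function.Injective ξ)
    (hξ0 : ξ 0 = -1)
    (hzero : ∀ i, (1 - ξ i ^ 2) * deriv (legendre p) (ξ i) = 0)
    (φ : Polynomial ℝ) (hdeg : φ.natDegree ≤ p)
    (hφ0 : φ.eval (ξ 0) = 1) (hφj : ∀ j : Fin (p + 1), j ≠ 0 → φ.eval (ξ j) = 0) :
    (∫ x in (-1 : ℝ)..1, (φ.eval x) ^ 2) ^ ((1:ℝ)/2) ≤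
      2 / Real.sqrt (p * (p + 1)) := by
  obtain ⟨m, rfl⟩ : ∃ m, p = m + 1 := ⟨p - 1, (Nat.succ_pred_eq_of_pos hp).symm⟩
  clear hp
  set K : Polynomial ℝ := derivative^[m+1] (RR (m+1)) with hK
  set K' : Polynomial ℝ := derivative K with hK'
  set G : Polynomial ℝ := (1 - X) * K' with hG
  set c : ℝ := (-1:ℝ)^(m+1) / (2^(m+1) * (m+1).factorial) with hc
  set c' : ℝ := (-1:ℝ)^(m+1) with hc'
  set F : ℝ := ((m+1).factorial : ℝ) with hF
  set t : ℝ := (2:ℝ)^m with ht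
  set s : ℝ := (-2:ℝ)^m with hs
  have hFpos : 0 < F := by positivity
  have hcne : c ≠ 0 := by
    rw [hc]
    apply div_ne_zero
    · exact pow_ne_zero _ (by norm_num)
    · positivity
  -- legendre as polynomial eval
  have hleg : legendre (m+1) = fun x => c * K.eval x := by
    funext x
    rw [legendre]
    have hf : (fun x : ℝ => (1 - x ^ 2) ^ (m+1)) = fun x => (RR (m+1)).eval x := by
      funext y; simp [RR]
    rw [hf, iteratedDeriv_polyeval]
  have hderiv : ∀ x, deriv (legendre (m+1)) x = c * K'.eval x := by
    intro x
    have : HasDerivAt (legendre (m+1)) (c * K'.eval x) x := by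
      rw [hleg]
      exact (K.hasDerivAt x).const_mul c
    exact this.deriv
  -- zero conditions on K'
  have hKz : ∀ i, (1 - ξ i ^ 2) * K'.eval (ξ i) = 0 := by
    intro i
    have h := hzero i
    rw [hderiv] at h
    have : c * ((1 - ξ i ^ 2) * K'.eval (ξ i)) = 0 := by linarith [h]
    exact (mul_eq_zero.mp this).resolve_left hcne
  -- G vanishes at the nodes other than ξ 0
  have hGj : ∀ j : Fin (m+2), j ≠ 0 → G.eval (ξ j) = 0 := by
    intro j hj
    have hne : ξ j ≠ -1 := by
      rw [← hξ0]; exact fun h => hj (hinj h)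
    have h := hKz j
    have hfac : (1 - ξ j) * ((1 + ξ j) * K'.eval (ξ j)) = 0 := by
      have : (1 - ξ j ^ 2) = (1 - ξ j) * (1 + ξ j) := by ring
      rw [this] at h; linarith [h]
    have hGx : G.eval (ξ j) = (1 - ξ j) * K'.eval (ξ j) := by
      simp [hG]
    rcases mul_eq_zero.mp hfac with h1 | h2
    · rw [hGx, h1, zero_mul]
    · rcases mul_eq_zero.mp h2 with h3 | h4
      · exact absurd (by linarith : ξ j = -1) hne
      · rw [hGx, h4, mul_zero]
  -- degree bounds
  have hdegRR : (RR (m+1)).natDegree ≤ 2*(m+1) := by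
    refine (natDegree_pow_le).trans ?_
    have h2 : (1 - X^2 : Polynomial ℝ).natDegree ≤ 2 := by
      refine (natDegree_sub_le _ _).trans ?_
      simp [natDegree_X_pow]
    exact le_trans (Nat.mul_le_mul_left _ h2) (by omega)
  have hdegK : K.natDegree ≤ m + 1 := by
    refine (natDegree_iterate_derivative _ _).trans ?_
    omega
  have hdegK' : K'.natDegree ≤ m := by
    refine (natDegree_derivative_le _).trans ?_
    omega
  have hdegG : G.natDegree ≤ m + 1 := by
    refine (natDegree_mul_le).trans ?_
    have h1 : (1 - X : Polynomial ℝ).natDegree ≤ 1 := by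
      refine (natDegree_sub_le _ _).trans ?_
      simp
    omega
  -- the interpolation identity
  set γ : ℝ := G.eval (-1) with hγ
  have hid : C γ * φ - G = 0 := by
    apply Polynomial.eq_zero_of_natDegree_lt_card_of_eval_eq_zero _ hinj
    · intro i
      rcases eq_or_ne i 0 with rfl | hi
      · rw [hξ0] at hφ0
        simp [hξ0, hφ0, hγ]
      · simp [hφj i hi, hGj i hi]
    · have h1 : (C γ * φ).natDegree ≤ m + 1 := (natDegree_C_mul_le _ _).trans hdeg
      refine lt_of_le_of_lt ((natDegree_sub_le _ _).trans (max_le h1 hdegG)) ?_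
      simp
  -- eval values of K and K'
  have hKform : ∀ n : ℕ, derivative^[n] (RR (m+1)) =
      C c' * derivative^[n] ((X - C (1:ℝ))^(m+1) * (X - C (-1:ℝ))^(m+1)) := by
    intro n
    rw [RR_eq, hc', Polynomial.iterate_derivative_C_mul]
  have hK'form : K' = derivative^[m+2] (RR (m+1)) := by
    rw [hK', hK, ← Function.iterate_succ_apply' derivative]
  have hK1 : K.eval 1 = c' * (F * (2*t)) := by
    rw [hK, hKform, eval_mul, eval_C, evalS_one]
    rw [hF, ht]; ring
  have hKn1 : K.eval (-1) = c' * ((-2*s) * F) := by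
    rw [hK, hKform, eval_mul, eval_C, evalS_negone]
    rw [hF, hs]; ring
  have hK'1 : K'.eval 1 = c' * ((m+2) * F * ((m+1) * t)) := by
    rw [hK'form, hKform, eval_mul, eval_C, evalS'_one]
  have hK'n1 : K'.eval (-1) = c' * ((m+2) * (m+1) * s * F) := by
    rw [hK'form, hKform, eval_mul, eval_C, evalS'_negone]
  have hcc : c' * c' = 1 := by
    rw [hc', ← pow_add]
    exact Even.neg_one_pow ⟨m+1, by ring⟩
  have hss : s * s = t * t := by
    rw [hs, ht, ← mul_pow, ← mul_pow]; norm_num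
  -- the integral of K'^2
  have hI : (∫ x in (-1:ℝ)..1, (K'.eval x)^2) = 4*(m+1)*(m+2)*F^2*t^2 := by
    have hibp := poly_ibp K' K
    rw [← hK'] at hibp
    have horth : (∫ x in (-1:ℝ)..1, (derivative K').eval x * K.eval x) = 0 := by
      have h2 : (∫ x in (-1:ℝ)..1, (derivative K').eval x * K.eval x)
          = ∫ x in (-1:ℝ)..1, K.eval x * (derivative K').eval x := by
        simp_rw [mul_comm]
      rw [h2, hK]
      apply ortho (m+1) (m+1) le_rfl
      have : (derivative K').natDegree ≤ m - 1 := by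
        refine (natDegree_derivative_le _).trans ?_
        omega
      omega
    rw [horth] at hibp
    have hsq : (∫ x in (-1:ℝ)..1, (K'.eval x)^2)
        = ∫ x in (-1:ℝ)..1, K'.eval x * K'.eval x := by
      simp_rw [sq]
    rw [hsq, hibp, hK1, hKn1, hK'1, hK'n1]
    have expand : c' * ((m+2) * F * ((m+1) * t)) * (c' * (F * (2*t)))
        - c' * ((m+2) * (m+1) * s * F) * (c' * ((-2*s) * F))
        = (c'*c') * (2*(m+1)*(m+2)*F^2*t^2 + 2*(m+1)*(m+2)*F^2*(s*s)) := by ring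
    rw [expand, hcc, hss]
    ring
  -- gamma
  have hγval : γ = 2 * (c' * ((m+2) * (m+1) * s * F)) := by
    rw [hγ, hG]
    simp only [eval_mul, eval_sub, eval_one, eval_X]
    rw [hK'n1]; ring
  have hγsq : γ^2 = 4*(m+1)^2*(m+2)^2*t^2*F^2 := by
    rw [hγval]
    have : (2 * (c' * ((m+2) * (m+1) * s * F)))^2
        = (c'*c') * (4*(m+1)^2*(m+2)^2*(s*s)*F^2) := by ring
    rw [this, hcc, hss]; ring
  have hγne : γ ≠ 0 := by
    rw [hγval]
    have hc'ne : c' ≠ 0 := by rw [hc']; exact pow_ne_zero _ (by norm_num)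
    have hsne : s ≠ 0 := by rw [hs]; exact pow_ne_zero _ (by norm_num)
    have hm2 : ((m:ℝ)+2) ≠ 0 := by positivity
    have hm1 : ((m:ℝ)+1) ≠ 0 := by positivity
    exact mul_ne_zero two_ne_zero (mul_ne_zero hc'ne
      (mul_ne_zero (mul_ne_zero (mul_ne_zero hm2 hm1) hsne) hFpos.ne'))
  -- φ in terms of G
  have hφx : ∀ x : ℝ, φ.eval x = γ⁻¹ * G.eval x := by
    intro x
    have h := hid
    have h2 : (C γ * φ - G).eval x = 0 := by rw [h]; simp
    simp only [eval_sub, eval_mul, eval_C] at h2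
    field_simp
    linarith [h2]
  -- integral bound
  have hGint : (∫ x in (-1:ℝ)..1, (G.eval x)^2) ≤ 4 * (4*(m+1)*(m+2)*F^2*t^2) := by
    have hmono : (∫ x in (-1:ℝ)..1, (G.eval x)^2)
        ≤ ∫ x in (-1:ℝ)..1, 4 * (K'.eval x)^2 := by
      apply intervalIntegral.integral_mono_on (by norm_num)
      · exact ((G.continuous.pow 2)).intervalIntegrable _ _
      · exact (continuous_const.mul (K'.continuous.pow 2)).intervalIntegrable _ _
      · intro x hx
        have hGx : G.eval x = (1-x) * K'.eval x := by simp [hG]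
        rw [hGx]
        have h1 : -1 ≤ x := hx.1
        have h2 : x ≤ 1 := hx.2
        nlinarith [mul_nonneg (mul_nonneg (by linarith : (0:ℝ) ≤ 1+x)
          (by linarith : (0:ℝ) ≤ 3-x)) (sq_nonneg (K'.eval x))]
    calc (∫ x in (-1:ℝ)..1, (G.eval x)^2) ≤ ∫ x in (-1:ℝ)..1, 4 * (K'.eval x)^2 := hmono
      _ = 4 * ∫ x in (-1:ℝ)..1, (K'.eval x)^2 := intervalIntegral.integral_const_mul 4 _
      _ = 4 * (4*(m+1)*(m+2)*F^2*t^2) := by rw [hI]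
  have hφint : (∫ x in (-1:ℝ)..1, (φ.eval x)^2) ≤ 4 / (((m:ℝ)+1)*((m:ℝ)+2)) := by
    have hrw : (∫ x in (-1:ℝ)..1, (φ.eval x)^2)
        = (γ⁻¹)^2 * ∫ x in (-1:ℝ)..1, (G.eval x)^2 := by
      simp_rw [hφx, mul_pow]
      rw [intervalIntegral.integral_const_mul]
    rw [hrw]
    have hγsqpos : 0 < γ^2 := by positivity
    have hbound : (γ⁻¹)^2 * (4 * (4*(m+1)*(m+2)*F^2*t^2)) = 4 / (((m:ℝ)+1)*((m:ℝ)+2)) := by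
      rw [inv_pow, hγsq]
      have htne : t ≠ 0 := by rw [ht]; positivity
      have hm1 : ((m:ℝ)+1) ≠ 0 := by positivity
      have hm2 : ((m:ℝ)+2) ≠ 0 := by positivity
      field_simp
    calc (γ⁻¹)^2 * (∫ x in (-1:ℝ)..1, (G.eval x)^2)
        ≤ (γ⁻¹)^2 * (4 * (4*(m+1)*(m+2)*F^2*t^2)) := by
          apply mul_le_mul_of_nonneg_left hGint (by positivity)
      _ = 4 / (((m:ℝ)+1)*((m:ℝ)+2)) := hbound
  -- final: rpow to sqrt
  have hnonneg : (0:ℝ) ≤ ∫ x in (-1:ℝ)..1, (φ.eval x)^2 :=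
    intervalIntegral.integral_nonneg (by norm_num) (fun x _ => sq_nonneg _)
  rw [← Real.sqrt_eq_rpow]
  have hstep : Real.sqrt (∫ x in (-1:ℝ)..1, (φ.eval x)^2)
      ≤ Real.sqrt (4 / (((m:ℝ)+1)*((m:ℝ)+2))) := Real.sqrt_le_sqrt hφint
  refine hstep.trans ?_
  rw [Real.sqrt_div (by norm_num : (0:ℝ) ≤ 4)]
  rw [show Real.sqrt 4 = 2 by
    rw [show (4:ℝ) = 2^2 by norm_num]; exact Real.sqrt_sq (by norm_num)]
  apply le_of_eq
  congr 2
  push_cast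
  ring
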